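/- There exists a constant c > 0 such that for all nonzero k in ℤ³, the sum over all j in ℤ³ with j ≠ 0 and j ≠ k of 1/(|j|² |k−j|²) is at most c/|k|, where |·| denotes the Euclidean norm. -/

import Mathlib

/-- The Euclidean norm of a lattice point in `ℤ³`. -/
noncomputable def en (j : Fin 3 → ℤ) : ℝ := Real.sqrt (∑ i, ((j i : ℝ)) ^ 2)

namespace KeyLemmaAux

open scoped ENNReal

/-! ### Basic facts about `en` -/

noncomputable def iota (j : Fin 3 → ℤ) : EuclideanSpace ℝ (Fin 3) :=
  (WithLp.equiv 2 (Fin 3 → ℝ)).symm (fun i => (j i : ℝ))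

lemma en_eq_norm (j : Fin 3 → ℤ) : en j = ‖iota j‖ := by
  rw [EuclideanSpace.norm_eq, en]
  congr 1
  refine Finset.sum_congr rfl fun i _ => ?_
  rw [Real.norm_eq_abs, sq_abs]
  rfl

lemma iota_sub (a b : Fin 3 → ℤ) : iota (a - b) = iota a - iota b := by
  ext i
  simp only [iota, PiLp.sub_apply, WithLp.equiv_symm_apply, Pi.sub_apply]
  push_cast
  rfl

lemma en_nonneg (j : Fin 3 → ℤ) : 0 ≤ en j := Real.sqrt_nonneg _

lemma en_sq (j : Fin 3 → ℤ) : en j ^ 2 = ∑ i, ((j i : ℝ)) ^ 2 := by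
  rw [en, Real.sq_sqrt]; positivity

lemma one_le_en {j : Fin 3 → ℤ} (hj : j ≠ 0) : 1 ≤ en j := by
  have h : ∃ i, j i ≠ 0 := by
    by_contra h
    push_neg at h
    exact hj (funext h)
  obtain ⟨i, hi⟩ := h
  have h1 : (1 : ℝ) ≤ ((j i : ℝ)) ^ 2 := by
    have : (1 : ℤ) ≤ (j i) ^ 2 := by
      rcases lt_or_gt_of_ne hi with h | h <;> nlinarith
    exact_mod_cast this
  have h2 : (1 : ℝ) ≤ ∑ i, ((j i : ℝ)) ^ 2 := by
    refine h1.trans (Finset.single_le_sum (f := fun i => ((j i:ℝ))^2)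
      (fun i _ => by positivity) (Finset.mem_univ i))
  calc (1:ℝ) = Real.sqrt 1 := by simp
  _ ≤ en j := Real.sqrt_le_sqrt h2

lemma en_pos {j : Fin 3 → ℤ} (hj : j ≠ 0) : 0 < en j := lt_of_lt_of_le one_pos (one_le_en hj)

lemma en_triangle (k j : Fin 3 → ℤ) : en k ≤ en j + en (k - j) := by
  rw [en_eq_norm, en_eq_norm, en_eq_norm]
  calc ‖iota k‖ = ‖iota j + iota (k - j)‖ := by rw [iota_sub]; congr 1; abel
  _ ≤ ‖iota j‖ + ‖iota (k - j)‖ := norm_add_le _ _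

/-! ### The sup norm and shells -/

def g (j : Fin 3 → ℤ) : ℕ := Finset.univ.sup fun i => (j i).natAbs

lemma g_eq_zero {j : Fin 3 → ℤ} : g j = 0 ↔ j = 0 := by
  constructor
  · intro h
    funext i
    have := Finset.sup_le_iff.mp h.le i (Finset.mem_univ i)
    simpa [Int.natAbs_eq_zero] using this
  · intro h; subst h; simp [g]

noncomputable def box (n : ℕ) : Finset (Fin 3 → ℤ) := Finset.Icc (fun _ => -(n:ℤ)) (fun _ => (n:ℤ))

lemma mem_box {n : ℕ} {x : Fin 3 → ℤ} : x ∈ box n ↔ ∀ i, (x i).natAbs ≤ n := by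
  simp only [box, Finset.mem_Icc, Pi.le_def]
  constructor
  · rintro ⟨h1, h2⟩ i
    have := h1 i; have := h2 i; omega
  · intro h
    constructor <;> intro i <;> have := h i <;> omega

lemma card_box (n : ℕ) : (box n).card = (2*n+1)^3 := by
  rw [box, Pi.card_Icc]
  have : ∀ i : Fin 3, (Finset.Icc (-(n:ℤ)) (n:ℤ)).card = 2*n+1 := fun i => by
    rw [Int.card_Icc]; omega
  rw [Finset.prod_congr rfl (fun i _ => this i), Finset.prod_const]
  simp

lemma fiber_subset' {n : ℕ} (hn : 1 ≤ n) :
    {x : Fin 3 → ℤ | g x = n} ⊆ ↑(box n \ box (n-1)) := by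
  intro x hx
  simp only [Set.mem_setOf_eq] at hx
  simp only [Finset.coe_sdiff, Set.mem_diff, Finset.mem_coe, mem_box]
  constructor
  · intro i
    rw [← hx]
    exact Finset.le_sup (f := fun i => (x i).natAbs) (Finset.mem_univ i)
  · intro hmem
    have : g x ≤ n - 1 := Finset.sup_le fun i _ => hmem i
    omega

lemma card_annulus {n : ℕ} (hn : 1 ≤ n) : (box n \ box (n-1)).card ≤ 26 * n^2 := by
  have hsub : box (n-1) ⊆ box n := by
    intro x hx
    rw [mem_box] at hx ⊢
    intro i
    exact (hx i).trans (by omega)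
  rw [Finset.card_sdiff_of_subset hsub, card_box, card_box]
  obtain ⟨m, rfl⟩ : ∃ m, n = m + 1 := ⟨n - 1, by omega⟩
  have h1 : (2*(m+1)+1)^3 = (2*(m+1-1)+1)^3 + (24*m^2+48*m+26) := by
    simp only [Nat.add_sub_cancel]
    ring
  have h2 : 26 * (m+1)^2 = 26*m^2 + 52*m + 26 := by ring
  omega

lemma g_le_en (x : Fin 3 → ℤ) : (g x : ℝ) ≤ en x := by
  obtain ⟨i, _, hi⟩ := Finset.exists_mem_eq_sup Finset.univ ⟨0, Finset.mem_univ 0⟩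
    (fun i => (x i).natAbs)
  rw [g, hi]
  have h1 : ((x i).natAbs : ℝ) = |((x i : ℝ))| := by
    rw [Nat.cast_natAbs]; push_cast; rfl
  rw [h1, ← Real.sqrt_sq_eq_abs]
  apply Real.sqrt_le_sqrt
  exact Finset.single_le_sum (f := fun i => ((x i:ℝ))^2) (fun i _ => by positivity)
    (Finset.mem_univ i)

lemma en_le_sqrt3_g (x : Fin 3 → ℤ) : en x ≤ Real.sqrt 3 * g x := by
  have h : ∀ i, ((x i : ℝ))^2 ≤ (g x : ℝ)^2 := by
    intro i
    have h1 : (x i).natAbs ≤ g x := Finset.le_sup (f := fun i => (x i).natAbs) (Finset.mem_univ i)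
    have h2 : |((x i : ℝ))| ≤ (g x : ℝ) := by
      rw [← Int.cast_abs]
      exact_mod_cast (Int.abs_eq_natAbs (x i)) ▸
        (by exact_mod_cast h1 : ((x i).natAbs : ℤ) ≤ (g x : ℤ))
    calc ((x i : ℝ))^2 = |((x i : ℝ))|^2 := (sq_abs _).symm
    _ ≤ (g x : ℝ)^2 := pow_le_pow_left₀ (abs_nonneg _) h2 2
  have : en x ≤ Real.sqrt (3 * (g x : ℝ)^2) := by
    rw [en]
    apply Real.sqrt_le_sqrt
    calc ∑ i, ((x i : ℝ))^2 ≤ ∑ _i : Fin 3, (g x : ℝ)^2 := Finset.sum_le_sum fun i _ => h i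
    _ = 3 * (g x : ℝ)^2 := by norm_num [Finset.sum_const]
  calc en x ≤ Real.sqrt (3 * (g x:ℝ)^2) := this
  _ = Real.sqrt 3 * g x := by
    rw [Real.sqrt_mul (by norm_num), Real.sqrt_sq (by positivity)]

/-! ### The majorant -/

lemma real_aux {K a b : ℝ} (ha : 1 ≤ a) (hb : 1 ≤ b) (hab : a ≤ b) (htri : K ≤ a + b) :
    1/(a^2*b^2) ≤ 4 * (if a ≤ K then 1/(K^2*a^2) else 1/a^4) := by
  split_ifs with h
  · have hK : 0 < K := lt_of_lt_of_le (by linarith) h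
    rw [mul_one_div, div_le_div_iff₀ (by positivity) (by positivity)]
    have h2b : K ≤ 2 * b := by linarith
    have hK2 : K^2 ≤ 4 * b^2 := by nlinarith
    nlinarith [sq_nonneg a, mul_le_mul_of_nonneg_right hK2 (sq_nonneg a)]
  · push_neg at h
    rw [mul_one_div, div_le_div_iff₀ (by positivity) (by positivity)]
    have hab2 : a^2 ≤ b^2 := by nlinarith
    nlinarith [mul_le_mul_of_nonneg_left hab2 (sq_nonneg a)]

noncomputable def H (K : ℝ) (x : Fin 3 → ℤ) : ℝ≥0∞ :=
  if x = 0 then 0 else ENNReal.ofReal (if en x ≤ K then 1/(K^2 * en x^2) else 1/(en x^4))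

lemma pointwise_bound {k j : Fin 3 → ℤ} (hk : k ≠ 0) (hj : j ≠ 0) (hjk : j ≠ k) :
    ENNReal.ofReal (1/(en j^2 * en (k - j)^2)) ≤ 4 * (H (en k) j + H (en k) (k - j)) := by
  have hkj : k - j ≠ 0 := sub_ne_zero.mpr (Ne.symm hjk)
  have haj : 1 ≤ en j := one_le_en hj
  have hbj : 1 ≤ en (k - j) := one_le_en hkj
  have htri : en k ≤ en j + en (k - j) := en_triangle k j
  have h4 : (4 : ℝ≥0∞) = ENNReal.ofReal 4 := by norm_num
  rcases le_total (en j) (en (k - j)) with hab | hab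
  · have hre := real_aux haj hbj hab htri
    have hH : H (en k) j = ENNReal.ofReal (if en j ≤ en k then 1/(en k^2 * en j^2)
        else 1/(en j^4)) := by rw [H, if_neg hj]
    calc ENNReal.ofReal (1/(en j^2 * en (k - j)^2))
        ≤ ENNReal.ofReal (4 * (if en j ≤ en k then 1/(en k^2 * en j^2) else 1/(en j^4))) :=
          ENNReal.ofReal_le_ofReal hre
      _ = 4 * H (en k) j := by
          rw [hH, h4, ← ENNReal.ofReal_mul (by norm_num : (0:ℝ) ≤ 4)]
      _ ≤ 4 * (H (en k) j + H (en k) (k - j)) :=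
          mul_le_mul_right le_self_add 4
  · have hre := real_aux hbj haj hab (by linarith)
    have hH : H (en k) (k - j) = ENNReal.ofReal (if en (k - j) ≤ en k then
        1/(en k^2 * en (k - j)^2) else 1/(en (k - j)^4)) := by rw [H, if_neg hkj]
    calc ENNReal.ofReal (1/(en j^2 * en (k - j)^2))
        = ENNReal.ofReal (1/(en (k - j)^2 * en j^2)) := by rw [mul_comm]
      _ ≤ ENNReal.ofReal (4 * (if en (k - j) ≤ en k then 1/(en k^2 * en (k - j)^2)
            else 1/(en (k - j)^4))) := ENNReal.ofReal_le_ofReal hre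
      _ = 4 * H (en k) (k - j) := by
          rw [hH, h4, ← ENNReal.ofReal_mul (by norm_num : (0:ℝ) ≤ 4)]
      _ ≤ 4 * (H (en k) j + H (en k) (k - j)) :=
          mul_le_mul_right le_add_self 4

noncomputable def A (K : ℝ) (n : ℕ) : ℝ≥0∞ :=
  if (n:ℝ) ≤ K then ENNReal.ofReal (1/(K^2*(n:ℝ)^2)) else 0

noncomputable def B (K : ℝ) (n : ℕ) : ℝ≥0∞ :=
  if K < Real.sqrt 3 * n then ENNReal.ofReal (1/(n:ℝ)^4) else 0

lemma H_le_AB {K : ℝ} (hK : 1 ≤ K) {n : ℕ} (hn : 1 ≤ n) {x : Fin 3 → ℤ} (hx : g x = n) :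
    H K x ≤ A K n + B K n := by
  have hx0 : x ≠ 0 := by
    intro h
    rw [h] at hx
    have : g (0 : Fin 3 → ℤ) = 0 := g_eq_zero.mpr rfl
    omega
  have hnen : (n:ℝ) ≤ en x := hx ▸ g_le_en x
  have hn1 : (1:ℝ) ≤ (n:ℝ) := by exact_mod_cast hn
  rw [H, if_neg hx0]
  split_ifs with h
  · have hA : A K n = ENNReal.ofReal (1/(K^2*(n:ℝ)^2)) := if_pos (le_trans hnen h)
    refine le_trans ?_ le_self_add
    rw [hA]
    apply ENNReal.ofReal_le_ofReal
    apply one_div_le_one_div_of_le (by positivity)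
    have : (n:ℝ)^2 ≤ en x^2 := by nlinarith
    nlinarith
  · push_neg at h
    have hB : B K n = ENNReal.ofReal (1/(n:ℝ)^4) := by
      rw [B, if_pos]
      exact lt_of_lt_of_le h (hx ▸ en_le_sqrt3_g x)
    refine le_trans ?_ le_add_self
    rw [hB]
    apply ENNReal.ofReal_le_ofReal
    apply one_div_le_one_div_of_le (by positivity)
    have h2 : (n:ℝ)^2 ≤ en x ^ 2 := by nlinarith
    calc (n:ℝ)^4 = ((n:ℝ)^2)^2 := by ring
    _ ≤ (en x^2)^2 := pow_le_pow_left₀ (by positivity) h2 2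
    _ = en x^4 := by ring

lemma fiber_sum_le {K : ℝ} (hK : 1 ≤ K) (n : ℕ) :
    (∑' x : {x : Fin 3 → ℤ // g x = n}, H K x.1)
      ≤ ((26 * n^2 : ℕ) : ℝ≥0∞) * (A K n + B K n) := by
  rcases Nat.eq_zero_or_pos n with rfl | hn
  · have hz : ∀ x : {x : Fin 3 → ℤ // g x = 0}, H K x.1 = 0 := by
      intro x
      rw [H, if_pos (g_eq_zero.mp x.2)]
    calc (∑' x : {x : Fin 3 → ℤ // g x = 0}, H K x.1) = 0 := by
          rw [tsum_congr hz, tsum_zero]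
      _ ≤ _ := zero_le
  · have hsub := fiber_subset' hn
    haveI : Fintype {x : Fin 3 → ℤ // g x = n} :=
      Set.Finite.fintype ((box n \ box (n-1)).finite_toSet.subset hsub)
    have hcard : Fintype.card {x : Fin 3 → ℤ // g x = n} ≤ 26 * n^2 := by
      have hinj : Function.Injective
          (fun x : {x : Fin 3 → ℤ // g x = n} =>
            (⟨x.1, Finset.mem_coe.mp (hsub x.2)⟩ : {y // y ∈ box n \ box (n-1)})) := by
        intro x y h
        simpa [Subtype.ext_iff] using h
      haveI : Fintype {y // y ∈ box n \ box (n-1)} := FinsetCoe.fintype _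
      calc Fintype.card {x : Fin 3 → ℤ // g x = n}
          ≤ Fintype.card {y // y ∈ box n \ box (n-1)} := Fintype.card_le_of_injective _ hinj
        _ = (box n \ box (n-1)).card := Fintype.card_coe _
        _ ≤ 26 * n^2 := card_annulus hn
    rw [tsum_fintype]
    calc ∑ x : {x : Fin 3 → ℤ // g x = n}, H K x.1
        ≤ Finset.univ.card • (A K n + B K n) :=
          Finset.sum_le_card_nsmul _ _ _ (fun x _ => H_le_AB hK hn x.2)
      _ = (Fintype.card {x : Fin 3 → ℤ // g x = n} : ℝ≥0∞) * (A K n + B K n) := by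
          rw [nsmul_eq_mul, Finset.card_univ]
      _ ≤ ((26 * n^2 : ℕ) : ℝ≥0∞) * (A K n + B K n) :=
          mul_le_mul_left (Nat.cast_le.mpr hcard) _

lemma tsum_A_le {K : ℝ} (hK : 1 ≤ K) :
    (∑' n : ℕ, (n:ℝ≥0∞)^2 * A K n) ≤ ENNReal.ofReal (2/K) := by
  have hK0 : 0 < K := lt_of_lt_of_le one_pos hK
  have hterm : ∀ n : ℕ, (n:ℝ≥0∞)^2 * A K n
      ≤ (if (n:ℝ) ≤ K then ENNReal.ofReal (1/K^2) else 0) := by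
    intro n
    rw [A]
    split_ifs with h
    · have hc : ((n:ℝ≥0∞))^2 = ENNReal.ofReal ((n:ℝ)^2) := by
        rw [ENNReal.ofReal_pow (by positivity), ENNReal.ofReal_natCast]
      rw [hc, ← ENNReal.ofReal_mul (by positivity)]
      apply ENNReal.ofReal_le_ofReal
      rcases Nat.eq_zero_or_pos n with rfl | hn
      · simp
        positivity
      · have hn0 : (0:ℝ) < (n:ℝ) := by exact_mod_cast hn
        have : (n:ℝ)^2 * (1/(K^2*(n:ℝ)^2)) = 1/K^2 := by
          field_simp
        rw [this]
    · rw [mul_zero]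
  refine le_trans (ENNReal.tsum_le_tsum hterm) ?_
  have hvanish : ∀ n ∉ Finset.range (⌊K⌋₊ + 1),
      (if (n:ℝ) ≤ K then ENNReal.ofReal (1/K^2) else 0) = 0 := by
    intro n hn
    rw [Finset.mem_range, not_lt] at hn
    rw [if_neg]
    push_neg
    exact (Nat.floor_lt hK0.le).mp (by omega)
  rw [tsum_eq_sum hvanish]
  calc ∑ n ∈ Finset.range (⌊K⌋₊ + 1), (if (n:ℝ) ≤ K then ENNReal.ofReal (1/K^2) else 0)
      ≤ ∑ _n ∈ Finset.range (⌊K⌋₊ + 1), ENNReal.ofReal (1/K^2) := by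
        apply Finset.sum_le_sum
        intro n _
        split_ifs
        · exact le_rfl
        · exact zero_le
    _ = ((⌊K⌋₊ + 1 : ℕ) : ℝ≥0∞) * ENNReal.ofReal (1/K^2) := by
        rw [Finset.sum_const, Finset.card_range, nsmul_eq_mul]
    _ = ENNReal.ofReal (((⌊K⌋₊:ℝ) + 1) * (1/K^2)) := by
        rw [ENNReal.ofReal_mul (by positivity)]
        congr 1
        rw [← ENNReal.ofReal_natCast (⌊K⌋₊ + 1)]
        congr 1
        push_cast
        ring
    _ ≤ ENNReal.ofReal (2/K) := by
        apply ENNReal.ofReal_le_ofReal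
        have h1 : (⌊K⌋₊:ℝ) ≤ K := Nat.floor_le hK0.le
        have h2 : ((⌊K⌋₊:ℝ) + 1) ≤ 2*K := by linarith
        calc ((⌊K⌋₊:ℝ) + 1) * (1/K^2) ≤ 2*K * (1/K^2) := by
              apply mul_le_mul_of_nonneg_right h2 (by positivity)
          _ = 2/K := by field_simp
  
lemma tsum_B_le {K : ℝ} (hK : 1 ≤ K) :
    (∑' n : ℕ, (n:ℝ≥0∞)^2 * B K n) ≤ ENNReal.ofReal (4/K) := by
  have hK0 : 0 < K := lt_of_lt_of_le one_pos hK
  have hs3 : (0:ℝ) < Real.sqrt 3 := Real.sqrt_pos.mpr (by norm_num)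
  have hs3le : Real.sqrt 3 ≤ 2 := by
    nlinarith [Real.sq_sqrt (show (0:ℝ) ≤ 3 by norm_num), Real.sqrt_nonneg 3]
  set M := ⌊K / Real.sqrt 3⌋₊ with hM
  have hterm : ∀ n : ℕ, (n:ℝ≥0∞)^2 * B K n
      ≤ (if M + 1 ≤ n then ENNReal.ofReal (((n:ℝ)^2)⁻¹) else 0) := by
    intro n
    rw [B]
    split_ifs with h h2
    · have hn0 : (0:ℝ) < (n:ℝ) := by
        by_contra hc
        push_neg at hc
        have : (n:ℝ) = 0 := le_antisymm hc (by positivity)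
        rw [this, mul_zero] at h
        linarith
      have hc : ((n:ℝ≥0∞))^2 = ENNReal.ofReal ((n:ℝ)^2) := by
        rw [ENNReal.ofReal_pow (by positivity), ENNReal.ofReal_natCast]
      rw [hc, ← ENNReal.ofReal_mul (by positivity)]
      apply ENNReal.ofReal_le_ofReal
      have : (n:ℝ)^2 * (1/(n:ℝ)^4) = ((n:ℝ)^2)⁻¹ := by
        field_simp
      rw [this]
    · exfalso
      apply h2
      have hdiv : K / Real.sqrt 3 < (n:ℝ) := by
        rw [div_lt_iff₀ hs3]
        linarith [h]
      have := (Nat.floor_lt (by positivity)).mpr hdiv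
      omega
    · rw [mul_zero]
      exact zero_le
    · rw [mul_zero]
  refine le_trans (ENNReal.tsum_le_tsum hterm) ?_
  have hbound : (∑' n : ℕ, (if M + 1 ≤ n then ENNReal.ofReal (((n:ℝ)^2)⁻¹) else 0))
      ≤ ENNReal.ofReal (2/((M:ℝ)+1)) := by
    rw [ENNReal.tsum_eq_iSup_sum]
    apply iSup_le
    intro s
    set N := s.sup id + 1 with hN
    have hsub : s.filter (fun n => M + 1 ≤ n) ⊆ Finset.Ioo M N := by
      intro n hn
      rw [Finset.mem_filter] at hn
      rw [Finset.mem_Ioo]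
      refine ⟨by omega, ?_⟩
      have : n ≤ s.sup id := Finset.le_sup (f := id) hn.1
      omega
    calc ∑ n ∈ s, (if M + 1 ≤ n then ENNReal.ofReal (((n:ℝ)^2)⁻¹) else 0)
        = ∑ n ∈ s.filter (fun n => M + 1 ≤ n), ENNReal.ofReal (((n:ℝ)^2)⁻¹) :=
          (Finset.sum_filter _ _).symm
      _ ≤ ∑ n ∈ Finset.Ioo M N, ENNReal.ofReal (((n:ℝ)^2)⁻¹) :=
          Finset.sum_le_sum_of_subset hsub
      _ = ENNReal.ofReal (∑ n ∈ Finset.Ioo M N, ((n:ℝ)^2)⁻¹) :=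
          (ENNReal.ofReal_sum_of_nonneg (fun n _ => by positivity)).symm
      _ ≤ ENNReal.ofReal (2/((M:ℝ)+1)) := by
          apply ENNReal.ofReal_le_ofReal
          have := sum_Ioo_inv_sq_le (α := ℝ) M N
          calc ∑ n ∈ Finset.Ioo M N, ((n:ℝ)^2)⁻¹
              = ∑ n ∈ Finset.Ioo M N, ((n^2 : ℕ) : ℝ)⁻¹ := by
                refine Finset.sum_congr rfl fun n _ => ?_
                push_cast
                rfl
            _ ≤ 2/((M:ℝ)+1) := by
                have h := sum_Ioo_inv_sq_le (α := ℝ) M N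
                exact_mod_cast h
  refine hbound.trans ?_
  apply ENNReal.ofReal_le_ofReal
  have hM1 : K / Real.sqrt 3 < (M:ℝ) + 1 := Nat.lt_floor_add_one _
  have hK2 : K / 2 ≤ K / Real.sqrt 3 := by
    apply div_le_div_of_nonneg_left hK0.le hs3 hs3le
  have hMpos : (0:ℝ) < (M:ℝ) + 1 := by positivity
  rw [div_le_div_iff₀ hMpos hK0]
  nlinarith

lemma tsum_H_le {k : Fin 3 → ℤ} (hk : k ≠ 0) :
    (∑' x : Fin 3 → ℤ, H (en k) x) ≤ ENNReal.ofReal (156 / en k) := by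
  set K := en k with hKdef
  have hK : 1 ≤ K := one_le_en hk
  have hK0 : 0 < K := lt_of_lt_of_le one_pos hK
  have step1 : (∑' x : Fin 3 → ℤ, H K x)
      = ∑' n : ℕ, ∑' x : {x : Fin 3 → ℤ // g x = n}, H K x.1 := by
    rw [← (Equiv.sigmaFiberEquiv g).tsum_eq (H K), ENNReal.tsum_sigma']
    rfl
  rw [step1]
  calc (∑' n : ℕ, ∑' x : {x : Fin 3 → ℤ // g x = n}, H K x.1)
      ≤ ∑' n : ℕ, ((26 * n^2 : ℕ) : ℝ≥0∞) * (A K n + B K n) :=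
        ENNReal.tsum_le_tsum (fun n => fiber_sum_le hK n)
    _ = 26 * ((∑' n : ℕ, (n:ℝ≥0∞)^2 * A K n) + ∑' n : ℕ, (n:ℝ≥0∞)^2 * B K n) := by
        rw [← ENNReal.tsum_add, ← ENNReal.tsum_mul_left]
        refine tsum_congr fun n => ?_
        push_cast
        ring
    _ ≤ 26 * (ENNReal.ofReal (2/K) + ENNReal.ofReal (4/K)) :=
        mul_le_mul_right (add_le_add (tsum_A_le hK) (tsum_B_le hK)) 26
    _ = ENNReal.ofReal (156/K) := by
        rw [← ENNReal.ofReal_add (by positivity) (by positivity)]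
        have h26 : (26 : ℝ≥0∞) = ENNReal.ofReal 26 := by norm_num
        rw [h26, ← ENNReal.ofReal_mul (by norm_num)]
        congr 1
        field_simp
        ring

lemma core {k : Fin 3 → ℤ} (hk : k ≠ 0) :
    (∑' j : {j : Fin 3 → ℤ // j ≠ 0 ∧ j ≠ k},
        ENNReal.ofReal (1 / (en j.1 ^ 2 * en (k - j.1) ^ 2)))
      ≤ ENNReal.ofReal (1248 / en k) := by
  set K := en k with hKdef
  have hK : 1 ≤ K := one_le_en hk
  have hK0 : 0 < K := lt_of_lt_of_le one_pos hK
  calc (∑' j : {j : Fin 3 → ℤ // j ≠ 0 ∧ j ≠ k},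
          ENNReal.ofReal (1 / (en j.1 ^ 2 * en (k - j.1) ^ 2)))
      ≤ ∑' j : {j : Fin 3 → ℤ // j ≠ 0 ∧ j ≠ k}, 4 * (H K j.1 + H K (k - j.1)) :=
        ENNReal.tsum_le_tsum (fun j => pointwise_bound hk j.2.1 j.2.2)
    _ ≤ ∑' j : Fin 3 → ℤ, 4 * (H K j + H K (k - j)) :=
        ENNReal.tsum_comp_le_tsum_of_injective Subtype.val_injective _
    _ = 4 * ((∑' j : Fin 3 → ℤ, H K j) + ∑' j : Fin 3 → ℤ, H K (k - j)) := by
        rw [ENNReal.tsum_mul_left, ENNReal.tsum_add]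
    _ = 4 * ((∑' j : Fin 3 → ℤ, H K j) + ∑' j : Fin 3 → ℤ, H K j) := by
        congr 2
        exact (Equiv.subLeft k).tsum_eq (H K)
    _ = 8 * ∑' j : Fin 3 → ℤ, H K j := by ring
    _ ≤ 8 * ENNReal.ofReal (156 / K) := mul_le_mul_right (tsum_H_le hk) 8
    _ = ENNReal.ofReal (1248 / K) := by
        have h8 : (8 : ℝ≥0∞) = ENNReal.ofReal 8 := by norm_num
        rw [h8, ← ENNReal.ofReal_mul (by norm_num)]
        congr 1
        field_simp
        ring

end KeyLemmaAux

/-- There exists `c > 0` such that for all nonzero `k ∈ ℤ³`,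
`∑_{j ≠ 0, j ≠ k} 1/(|j|²|k−j|²) ≤ c/|k|`. -/
theorem key_lemma :
    ∃ c : ℝ, 0 < c ∧ ∀ k : Fin 3 → ℤ, k ≠ 0 →
      (∑' j : {j : Fin 3 → ℤ // j ≠ 0 ∧ j ≠ k},
        1 / (en j.1 ^ 2 * en (k - j.1) ^ 2)) ≤ c / en k := by
  refine ⟨1248, by norm_num, fun k hk => ?_⟩
  have hK0 : 0 < en k := KeyLemmaAux.en_pos hk
  by_cases hsum : Summable (fun j : {j : Fin 3 → ℤ // j ≠ 0 ∧ j ≠ k} =>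
      1 / (en j.1 ^ 2 * en (k - j.1) ^ 2))
  · have hnn : ∀ j : {j : Fin 3 → ℤ // j ≠ 0 ∧ j ≠ k},
        0 ≤ 1 / (en j.1 ^ 2 * en (k - j.1) ^ 2) := by
      intro j
      have := KeyLemmaAux.en_nonneg j.1
      have := KeyLemmaAux.en_nonneg (k - j.1)
      positivity
    have h1 := ENNReal.ofReal_tsum_of_nonneg hnn hsum
    have h2 := KeyLemmaAux.core hk
    rw [← h1] at h2
    exact (ENNReal.ofReal_le_ofReal_iff (by positivity)).mp h2
  · rw [tsum_eq_zero_of_not_summable hsum]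
    positivity
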